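/- For every nonnegative integer n, \sum_{k=0}^{n} (2k+1)^3 * binom(2n+1, n-k)^2 = (2n+1)^2 * binom(2n,n)^2. -/

import Mathlib

open Finset

/-- The WZ-style certificate function. -/
private def Faux (n k : ℕ) : ℤ :=
  (((n : ℤ) + 1) ^ 2 - (k : ℤ) ^ 2) * (2 * (k : ℤ) ^ 2 + n) *
    ((2 * n + 1).choose (n - k)) * ((2 * n + 1).choose (n - k + 1))

private lemma step (n k : ℕ) (hk : k ≤ n) :
    Faux n k - Faux n (k + 1) =
      (n : ℤ) * (2 * k + 1) ^ 3 * ((2 * n + 1).choose (n - k)) ^ 2 := by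
  rcases Nat.lt_or_ge k n with hlt | hge
  · obtain ⟨j, rfl⟩ : ∃ j, n = k + j + 1 := ⟨n - k - 1, by omega⟩
    have h1 : k + j + 1 - k = j + 1 := by omega
    have h2 : k + j + 1 - (k + 1) = j := by omega
    simp only [Faux, h1, h2]
    have R1 : ((2 * (k + j + 1) + 1).choose (j + 1) : ℤ) * ((j : ℤ) + 1) =
        ((2 * (k + j + 1) + 1).choose j : ℤ) * (2 * (k : ℤ) + (j : ℤ) + 3) := by
      have h := Nat.choose_succ_right_eq (2 * (k + j + 1) + 1) j
      have hm : 2 * (k + j + 1) + 1 - j = 2 * k + j + 3 := by omega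
      rw [hm] at h
      exact_mod_cast congrArg (Nat.cast : ℕ → ℤ) h
    have R2 : ((2 * (k + j + 1) + 1).choose (j + 2) : ℤ) * ((j : ℤ) + 2) =
        ((2 * (k + j + 1) + 1).choose (j + 1) : ℤ) * (2 * (k : ℤ) + (j : ℤ) + 2) := by
      have h := Nat.choose_succ_right_eq (2 * (k + j + 1) + 1) (j + 1)
      have hm : 2 * (k + j + 1) + 1 - (j + 1) = 2 * k + j + 2 := by omega
      rw [hm] at h
      exact_mod_cast congrArg (Nat.cast : ℕ → ℤ) h
    have hnz : ((j : ℤ) + 1) * ((j : ℤ) + 2) * (2 * (k : ℤ) + (j : ℤ) + 3) ≠ 0 := by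
      positivity
    apply mul_left_cancel₀ hnz
    push_cast
    set b0 : ℤ := ((2 * (k + j + 1) + 1).choose j : ℤ)
    set b1 : ℤ := ((2 * (k + j + 1) + 1).choose (j + 1) : ℤ)
    set b2 : ℤ := ((2 * (k + j + 1) + 1).choose (j + 2) : ℤ)
    linear_combination
      (((((k : ℤ) + j + 2) ^ 2 - (k : ℤ) ^ 2) * (2 * (k : ℤ) ^ 2 + ((k : ℤ) + j + 1))) * b1 *
          ((j : ℤ) + 1) * (2 * (k : ℤ) + (j : ℤ) + 3)) * R2 +
      (((((k : ℤ) + j + 2) ^ 2 - ((k : ℤ) + 1) ^ 2) * (2 * ((k : ℤ) + 1) ^ 2 + ((k : ℤ) + j + 1))) *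
          b1 * ((j : ℤ) + 1) * ((j : ℤ) + 2)) * R1
  · have hkn : k = n := le_antisymm hk hge
    subst hkn
    have h1 : k - k = 0 := Nat.sub_self k
    have h2 : k - (k + 1) = 0 := by omega
    have h3 : k - k + 1 = 1 := by omega
    have h4 : k - (k + 1) + 1 = 1 := by omega
    simp only [Faux, h1, h2, h3, h4, zero_add, Nat.choose_zero_right, Nat.choose_one_right]
    push_cast
    ring

theorem stmt_15 (n : ℕ) :
    ∑ k ∈ Finset.range (n + 1), (2 * k + 1) ^ 3 * ((2 * n + 1).choose (n - k)) ^ 2 =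
      (2 * n + 1) ^ 2 * ((2 * n).choose n) ^ 2 := by
  rcases Nat.eq_zero_or_pos n with rfl | hn
  · decide
  have hsymm : (2 * n + 1).choose (n + 1) = (2 * n + 1).choose n := by
    rw [show n + 1 = 2 * n + 1 - n by omega, Nat.choose_symm (by omega)]
  have hch : ((2 * n + 1).choose n : ℤ) * ((n : ℤ) + 1) =
      (2 * (n : ℤ) + 1) * ((2 * n).choose n : ℤ) := by
    have h := Nat.add_one_mul_choose_eq (2 * n) n
    rw [hsymm] at h
    exact_mod_cast congrArg (Nat.cast : ℕ → ℤ) h.symm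
  have key : (n : ℤ) * ∑ k ∈ Finset.range (n + 1),
      ((2 * (k : ℤ) + 1) ^ 3 * (((2 * n + 1).choose (n - k) : ℕ) : ℤ) ^ 2) =
      (n : ℤ) * ((2 * (n : ℤ) + 1) ^ 2 * (((2 * n).choose n : ℕ) : ℤ) ^ 2) := by
    rw [Finset.mul_sum]
    have hsum : ∀ k ∈ Finset.range (n + 1),
        (n : ℤ) * ((2 * (k : ℤ) + 1) ^ 3 * (((2 * n + 1).choose (n - k) : ℕ) : ℤ) ^ 2) =
        Faux n k - Faux n (k + 1) := by
      intro k hk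
      rw [step n k (by have := Finset.mem_range.mp hk; omega)]
      ring
    rw [Finset.sum_congr rfl hsum, Finset.sum_range_sub' (fun k => Faux n k)]
    have hFn1 : Faux n (n + 1) = 0 := by
      simp only [Faux]
      push_cast
      ring
    rw [hFn1]
    simp only [Faux, Nat.sub_zero]
    rw [hsymm]
    push_cast
    linear_combination ((n : ℤ) * (((2 * n + 1).choose n : ℤ) * ((n : ℤ) + 1) +
      (2 * (n : ℤ) + 1) * ((2 * n).choose n : ℤ))) * hch
  have hnz : (n : ℤ) ≠ 0 := by exact_mod_cast hn.ne'
  have h2 := mul_left_cancel₀ hnz key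
  exact_mod_cast h2
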